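/- Let A be an n×n real symmetric positive-definite matrix and let π be an equivalence relation (partition) on the index set {1,…,n}. Let D be the block-diagonal part of A with respect to π, i.e. D_{ij} = A_{ij} if i and j lie in the same cell of π and D_{ij} = 0 otherwise. Then the spectral norm satisfies ‖A − D‖₂ < ‖A‖₂. -/

import Mathlib

open scoped BigOperators RealInnerProductSpace
open Matrix

/-- The spectral norm (operator 2-norm) of a real matrix: the operator norm of the associated
linear map between Euclidean spaces, i.e. the largest singular value. -/
noncomputable def matSpectralNorm {n : ℕ} (M : Matrix (Fin n) (Fin n) ℝ) : ℝ :=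
  ‖LinearMap.toContinuousLinearMap (Matrix.toEuclideanLin M)‖

lemma inner_eq_dot {n : ℕ} (M : Matrix (Fin n) (Fin n) ℝ) (x : EuclideanSpace ℝ (Fin n)) :
    ⟪x, Matrix.toEuclideanLin M x⟫ =
      (WithLp.equiv 2 (Fin n → ℝ) x) ⬝ᵥ M *ᵥ (WithLp.equiv 2 (Fin n → ℝ) x) := by
  simp [PiLp.inner_apply, dotProduct, Matrix.mulVec, RCLike.inner_apply,
    Matrix.toEuclideanLin_apply, Finset.mul_sum, mul_comm]

lemma quad_le_spectralNorm {n : ℕ} (M : Matrix (Fin n) (Fin n) ℝ) (x : EuclideanSpace ℝ (Fin n)) :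
    ⟪x, Matrix.toEuclideanLin M x⟫ ≤ matSpectralNorm M * ‖x‖ ^ 2 := by
  calc ⟪x, Matrix.toEuclideanLin M x⟫ ≤ ‖x‖ * ‖Matrix.toEuclideanLin M x‖ :=
        real_inner_le_norm _ _
    _ ≤ ‖x‖ * (matSpectralNorm M * ‖x‖) := by
        refine mul_le_mul_of_nonneg_left ?_ (norm_nonneg _)
        exact (LinearMap.toContinuousLinearMap (Matrix.toEuclideanLin M)).le_opNorm x
    _ = matSpectralNorm M * ‖x‖ ^ 2 := by ring

lemma norm_sq_eq_dot {n : ℕ} (w : Fin n → ℝ) :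
    ‖(WithLp.equiv 2 (Fin n → ℝ)).symm w‖ ^ 2 = w ⬝ᵥ w := by
  rw [EuclideanSpace.norm_eq, Real.sq_sqrt (by positivity)]
  simp [dotProduct, Real.norm_eq_abs, sq_abs, sq]

lemma quad_le_spectralNorm' {n : ℕ} (M : Matrix (Fin n) (Fin n) ℝ) (w : Fin n → ℝ) :
    w ⬝ᵥ M *ᵥ w ≤ matSpectralNorm M * (w ⬝ᵥ w) := by
  have h := quad_le_spectralNorm M ((WithLp.equiv 2 (Fin n → ℝ)).symm w)
  rw [inner_eq_dot, norm_sq_eq_dot] at h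
  simpa using h

lemma herm_apply_eig {n : ℕ} {B : Matrix (Fin n) (Fin n) ℝ} (hB : B.IsHermitian) (i : Fin n) :
    Matrix.toEuclideanLin B (hB.eigenvectorBasis i) =
      hB.eigenvalues i • hB.eigenvectorBasis i := by
  ext j
  have := congrFun (hB.mulVec_eigenvectorBasis i) j
  simpa [Matrix.toEuclideanLin_apply] using this

lemma spectralNorm_herm_le {n : ℕ} {B : Matrix (Fin n) (Fin n) ℝ} (hB : B.IsHermitian)
    {C : ℝ} (hC : 0 ≤ C) (h : ∀ i, |hB.eigenvalues i| ≤ C) :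
    matSpectralNorm B ≤ C := by
  refine ContinuousLinearMap.opNorm_le_bound _ hC ?_
  intro x
  simp only [LinearMap.coe_toContinuousLinearMap']
  set b := hB.eigenvectorBasis with hb
  have hsym : (Matrix.toEuclideanLin B).IsSymmetric :=
    Matrix.isHermitian_iff_isSymmetric.1 hB
  have hrep : ∀ i, b.repr (Matrix.toEuclideanLin B x) i = hB.eigenvalues i * b.repr x i := by
    intro i
    rw [b.repr_apply_apply, b.repr_apply_apply, ← hsym (b i) x, herm_apply_eig hB i]
    simp [real_inner_smul_left, Finset.mul_sum, hb, mul_assoc]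
  have h1 : ‖Matrix.toEuclideanLin B x‖ ^ 2 ≤ (C * ‖x‖) ^ 2 := by
    rw [← b.repr.norm_map (Matrix.toEuclideanLin B x), ← b.repr.norm_map x]
    rw [EuclideanSpace.norm_eq, EuclideanSpace.norm_eq]
    rw [Real.sq_sqrt (by positivity)]
    rw [mul_pow, Real.sq_sqrt (by positivity), Finset.mul_sum]
    refine Finset.sum_le_sum fun i _ => ?_
    rw [hrep i]
    have : ‖hB.eigenvalues i * b.repr x i‖ ^ 2 =
        (hB.eigenvalues i)^2 * ‖b.repr x i‖ ^ 2 := by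
      rw [norm_mul, mul_pow]; norm_num
    rw [this]
    refine mul_le_mul_of_nonneg_right ?_ (by positivity)
    calc (hB.eigenvalues i)^2 = |hB.eigenvalues i|^2 := (sq_abs _).symm
      _ ≤ C ^ 2 := by
          have := h i
          nlinarith [abs_nonneg (hB.eigenvalues i)]
  calc ‖Matrix.toEuclideanLin B x‖ = Real.sqrt (‖Matrix.toEuclideanLin B x‖^2) :=
        (Real.sqrt_sq (norm_nonneg _)).symm
    _ ≤ Real.sqrt ((C * ‖x‖)^2) := Real.sqrt_le_sqrt h1
    _ = C * ‖x‖ := Real.sqrt_sq (by positivity)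

open Classical in
/-- if `A` is an `n×n` real symmetric positive-definite matrix and `D` is the
block-diagonal part of `A` with respect to an equivalence relation `π` on the index set,
then `‖A − D‖₂ < ‖A‖₂`. -/
theorem spectralNorm_sub_blockDiag_lt
    {n : ℕ} (hn : 0 < n) (A : Matrix (Fin n) (Fin n) ℝ) (hA : A.PosDef)
    (π : Fin n → Fin n → Prop) (hπ : Equivalence π) :
    matSpectralNorm (A - Matrix.of fun i j => if π i j then A i j else 0) <
      matSpectralNorm A := by
  classical
  set D : Matrix (Fin n) (Fin n) ℝ := Matrix.of fun i j => if π i j then A i j else 0 with hD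
  have hAh : A.IsHermitian := hA.1
  have hDh : D.IsHermitian := by
    ext i j
    simp only [hD, Matrix.conjTranspose_apply, Matrix.of_apply, star_trivial]
    by_cases h : π i j
    · rw [if_pos (hπ.symm h), if_pos h]
      simpa using hAh.apply i j
    · rw [if_neg (fun h' => h (hπ.symm h')), if_neg h]
  have hBh : (A - D).IsHermitian := hAh.sub hDh
  -- positive definiteness facts for real matrices
  have hpos : ∀ w : Fin n → ℝ, w ≠ 0 → 0 < w ⬝ᵥ A *ᵥ w := by
    intro w hw
    have := hA.dotProduct_mulVec_pos hw
    simpa using this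
  have hpsd : ∀ w : Fin n → ℝ, 0 ≤ w ⬝ᵥ A *ᵥ w := by
    intro w
    have := hA.posSemidef.dotProduct_mulVec_nonneg w
    simpa using this
  -- the key pointwise inequality
  have hkey : ∀ x : EuclideanSpace ℝ (Fin n), ‖x‖ = 1 →
      |⟪x, Matrix.toEuclideanLin (A - D) x⟫| < matSpectralNorm A := by
    intro x hx
    set v : Fin n → ℝ := WithLp.equiv 2 (Fin n → ℝ) x with hv
    have hvv : v ⬝ᵥ v = 1 := by
      have := norm_sq_eq_dot v
      simp only [hv] at this ⊢
      rw [← this]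
      simp [hx]
    have hvne : v ≠ 0 := by
      intro h0
      have : (1 : ℝ) = 0 := by rw [← hvv, h0]; simp
      norm_num at this
    obtain ⟨i₀, hi₀⟩ : ∃ i, v i ≠ 0 := by
      by_contra hc
      push_neg at hc
      exact hvne (funext hc)
    letI s : Setoid (Fin n) := ⟨π, hπ⟩
    set y : Quotient s → (Fin n → ℝ) := fun q j => if Quotient.mk s j = q then v j else 0 with hy
    -- decomposition of the quadratic form of D
    have hterm : ∀ i j, (∑ q : Quotient s, y q i * (A i j * y q j)) = v i * (D i j * v j) := by
      intro i j
      rw [Finset.sum_eq_single (Quotient.mk s i)]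
      · by_cases h : π i j
        · have hji : (Quotient.mk s j : Quotient s) = Quotient.mk s i :=
            Quotient.sound (hπ.symm h)
          simp only [hy]
          rw [if_pos trivial, if_pos hji]
          simp only [hD, Matrix.of_apply]
          rw [if_pos h]
        · have hji : (Quotient.mk s j : Quotient s) ≠ Quotient.mk s i := fun hq =>
            h (hπ.symm (Quotient.exact hq))
          simp only [hy]
          rw [if_pos trivial, if_neg hji]
          simp only [hD, Matrix.of_apply]
          rw [if_neg h]; ring
      · intro q _ hq
        simp only [hy]
        rw [if_neg (Ne.symm hq)]
        ring
      · intro h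
        exact absurd (Finset.mem_univ _) h
    have hdec : v ⬝ᵥ D *ᵥ v = ∑ q : Quotient s, (y q) ⬝ᵥ A *ᵥ (y q) := by
      have h2 : ∑ q : Quotient s, (y q) ⬝ᵥ A *ᵥ (y q) = ∑ i, ∑ j, v i * (D i j * v j) := by
        simp only [dotProduct, Matrix.mulVec, Finset.mul_sum]
        rw [Finset.sum_comm]
        refine Finset.sum_congr rfl fun i _ => ?_
        rw [Finset.sum_comm]
        exact Finset.sum_congr rfl fun j _ => hterm i j
      rw [h2]
      simp only [dotProduct, Matrix.mulVec, Finset.mul_sum]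
    -- sum of dot squares
    have hysum : ∑ q : Quotient s, (y q) ⬝ᵥ (y q) = 1 := by
      rw [← hvv]
      have h2 : ∑ q : Quotient s, (y q) ⬝ᵥ (y q) = ∑ i, v i * v i := by
        simp only [dotProduct]
        rw [Finset.sum_comm]
        refine Finset.sum_congr rfl fun i _ => ?_
        rw [Finset.sum_eq_single (Quotient.mk s i)]
        · simp [hy]
        · intro q _ hq
          simp only [hy]
          rw [if_neg (Ne.symm hq)]
          ring
        · intro h
          exact absurd (Finset.mem_univ _) h
      rw [h2]
      simp [dotProduct]
    -- positivity of the D-quadratic form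
    have hDpos : 0 < v ⬝ᵥ D *ᵥ v := by
      rw [hdec]
      refine Finset.sum_pos' (fun q _ => hpsd (y q)) ?_
      refine ⟨Quotient.mk s i₀, Finset.mem_univ _, hpos _ ?_⟩
      intro h0
      have := congrFun h0 i₀
      simp only [hy, if_pos rfl] at this
      exact hi₀ this
    -- upper bound of the D-quadratic form
    have hDle : v ⬝ᵥ D *ᵥ v ≤ matSpectralNorm A := by
      rw [hdec]
      calc ∑ q : Quotient s, (y q) ⬝ᵥ A *ᵥ (y q)
          ≤ ∑ q : Quotient s, matSpectralNorm A * ((y q) ⬝ᵥ (y q)) :=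
            Finset.sum_le_sum fun q _ => quad_le_spectralNorm' A (y q)
        _ = matSpectralNorm A * ∑ q : Quotient s, (y q) ⬝ᵥ (y q) := by
            rw [Finset.mul_sum]
        _ = matSpectralNorm A := by rw [hysum, mul_one]
    -- facts about the A-quadratic form
    have hApos : 0 < v ⬝ᵥ A *ᵥ v := hpos v hvne
    have hAle : v ⬝ᵥ A *ᵥ v ≤ matSpectralNorm A := by
      have := quad_le_spectralNorm' A v
      rw [hvv, mul_one] at this
      exact this
    -- assemble
    have hsub : ⟪x, Matrix.toEuclideanLin (A - D) x⟫ = v ⬝ᵥ A *ᵥ v - v ⬝ᵥ D *ᵥ v := by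
      rw [inner_eq_dot]
      simp only [← hv, Matrix.sub_mulVec, dotProduct_sub]
    rw [hsub, abs_lt]
    constructor
    · linarith
    · linarith
  -- conclude via eigenvalues of A - D
  obtain ⟨k, -, hk⟩ := Finset.exists_max_image (Finset.univ : Finset (Fin n))
    (fun i => |hBh.eigenvalues i|) ⟨⟨0, hn⟩, Finset.mem_univ _⟩
  have hunit : ‖hBh.eigenvectorBasis k‖ = 1 := hBh.eigenvectorBasis.orthonormal.1 k
  have heig : ⟪hBh.eigenvectorBasis k, Matrix.toEuclideanLin (A - D) (hBh.eigenvectorBasis k)⟫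
      = hBh.eigenvalues k := by
    rw [herm_apply_eig hBh k, real_inner_smul_right, real_inner_self_eq_norm_sq, hunit]
    simp
  have h1 : matSpectralNorm (A - D) ≤ |hBh.eigenvalues k| :=
    spectralNorm_herm_le hBh (abs_nonneg _) (fun i => hk i (Finset.mem_univ _))
  have h2 : |hBh.eigenvalues k| < matSpectralNorm A := by
    rw [← heig]
    exact hkey _ hunit
  exact lt_of_le_of_lt h1 h2
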